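/- arXiv:1001.2410 — 3 statements merged into one kernel-verified Lean document; each statement's English description precedes it below -/
import Mathlib

section
/- If A is an n×n Hermitian positive semidefinite matrix of rank r, then the limit as P → ∞ of log det(I + P·A) / log P equals r. -/
open Matrix Filter
open scoped ComplexOrder

private lemma aux_tendsto (c : ℝ) (hc : 0 ≤ c) :
    Tendsto (fun P : ℝ => Real.log (1 + P * c) / Real.log P) atTop
      (nhds (if c = 0 then 0 else 1)) := by
  rcases eq_or_lt_of_le hc with h | h
  · simp [← h]
  · rw [if_neg h.ne']
    have heq : ∀ᶠ P : ℝ in atTop,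
        Real.log (1 + P * c) / Real.log P = 1 + Real.log (P⁻¹ + c) * (Real.log P)⁻¹ := by
      filter_upwards [eventually_gt_atTop (1 : ℝ)] with P hP
      have hP0 : 0 < P := lt_trans one_pos hP
      have hlogP : Real.log P ≠ 0 := (Real.log_pos hP).ne'
      have h1 : 1 + P * c = P * (P⁻¹ + c) := by field_simp
      rw [h1, Real.log_mul hP0.ne' (by positivity), add_div, div_self hlogP, div_eq_mul_inv]
    rw [tendsto_congr' heq]
    have h2 : Tendsto (fun P : ℝ => Real.log (P⁻¹ + c) * (Real.log P)⁻¹) atTop (nhds 0) := by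
      have ha : Tendsto (fun P : ℝ => Real.log (P⁻¹ + c)) atTop (nhds (Real.log c)) := by
        have : Tendsto (fun P : ℝ => P⁻¹ + c) atTop (nhds (0 + c)) :=
          tendsto_inv_atTop_zero.add tendsto_const_nhds
        rw [zero_add] at this
        exact (Real.continuousAt_log h.ne').tendsto.comp this
      have hb : Tendsto (fun P : ℝ => (Real.log P)⁻¹) atTop (nhds 0) :=
        Real.tendsto_log_atTop.inv_tendsto_atTop
      simpa using ha.mul hb
    simpa using (tendsto_const_nhds (x := (1:ℝ))).add h2

theorem logdet_dof_limit (n r : ℕ) (A : Matrix (Fin n) (Fin n) ℂ)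
    (hA : A.PosSemidef) (hr : A.rank = r) :
    Tendsto (fun P : ℝ =>
        Real.log ‖(1 + (P : ℂ) • A).det‖ / Real.log P)
      atTop (nhds (r : ℝ)) := by
  have hH := hA.1
  set μ := hH.eigenvalues with hμ
  have hμ0 : ∀ i, 0 ≤ μ i := fun i => hA.eigenvalues_nonneg i
  set U : Matrix (Fin n) (Fin n) ℂ := (hH.eigenvectorUnitary : Matrix (Fin n) (Fin n) ℂ) with hUdef
  have hdet : ∀ P : ℝ, (1 + (P : ℂ) • A).det = ∏ i, ((1 : ℂ) + P * μ i) := by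
    intro P
    have hU : U * star U = 1 := (Matrix.mem_unitaryGroup_iff).mp hH.eigenvectorUnitary.2
    have h1 : (1 : Matrix (Fin n) (Fin n) ℂ) + (P : ℂ) • A
        = U * (1 + (P : ℂ) • diagonal (Complex.ofReal ∘ μ)) * star U := by
      conv_lhs => rw [hH.spectral_theorem]
      rw [mul_add, add_mul, mul_one, hU, Matrix.mul_smul, Matrix.smul_mul]
      rfl
    rw [h1, Matrix.det_mul_right_comm, hU, one_mul]
    rw [show (1 : Matrix (Fin n) (Fin n) ℂ) + (P : ℂ) • diagonal (Complex.ofReal ∘ μ)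
        = diagonal (fun i => (1 : ℂ) + P * μ i) by
      rw [← diagonal_one, ← diagonal_smul, ← diagonal_add]; rfl]
    rw [det_diagonal]
  have heq : ∀ᶠ P : ℝ in atTop,
      Real.log ‖(1 + (P : ℂ) • A).det‖ / Real.log P
        = ∑ i, Real.log (1 + P * μ i) / Real.log P := by
    filter_upwards [eventually_ge_atTop (0 : ℝ)] with P hP
    have hpos : ∀ i, 0 < 1 + P * μ i := fun i =>
      add_pos_of_pos_of_nonneg one_pos (mul_nonneg hP (hμ0 i))
    rw [hdet P]
    have : ∀ i, ((1 : ℂ) + P * μ i) = ((1 + P * μ i : ℝ) : ℂ) := by intro i; push_cast; ring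
    simp_rw [this, ← Complex.ofReal_prod, Complex.norm_real, Real.norm_eq_abs,
      abs_of_pos (Finset.prod_pos fun i _ => hpos i),
      Real.log_prod (fun i _ => (hpos i).ne'), Finset.sum_div]
  rw [tendsto_congr' heq]
  have hsum : Tendsto (fun P : ℝ => ∑ i, Real.log (1 + P * μ i) / Real.log P) atTop
      (nhds (∑ i, if μ i = 0 then (0:ℝ) else 1)) :=
    tendsto_finset_sum _ fun i _ => aux_tendsto (μ i) (hμ0 i)
  convert hsum using 2
  rw [hH.rank_eq_card_non_zero_eigs] at hr
  have hcard : ∑ i, (if μ i = 0 then (0:ℝ) else 1)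
      = ((Finset.univ.filter fun i => ¬ μ i = 0).card : ℝ) := by
    rw [Finset.sum_ite, Finset.sum_const_zero, zero_add, Finset.sum_const, nsmul_eq_mul, mul_one]
  rw [hcard, ← hr, Fintype.card_subtype]
end

section
/- For row vectors g₁, g₂ ∈ ℂ^{1×M}: (for every Hermitian positive semidefinite M×M matrix S, g₁ S g₁^H = g₂ S g₂^H) if and only if there exists a unit-modulus complex scalar c with g₂ = c·g₁. -/
open Matrix
open scoped ComplexOrder

lemma quad_eval (M : ℕ) (g v : Fin M → ℂ) :
    g ⬝ᵥ (vecMulVec v (star v)).mulVec (star g) = (g ⬝ᵥ v) * star (g ⬝ᵥ v) := by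
  simp only [mulVec, dotProduct, vecMulVec_apply, Pi.star_apply, star_sum, star_mul',
    Finset.mul_sum, Finset.sum_mul]
  rw [Finset.sum_comm]
  congr 1; ext i; congr 1; ext j; ring

lemma outer_psd (M : ℕ) (v : Fin M → ℂ) : (vecMulVec v (star v)).PosSemidef := by
  rw [posSemidef_iff_dotProduct_mulVec]
  constructor
  · ext i j
    simp [vecMulVec_apply, conjTranspose_apply, mul_comm]
  · intro x
    have h := quad_eval M (star x) v
    rw [star_star] at h
    rw [h]
    exact mul_star_self_nonneg _

theorem quadratic_forms_equal_iff_unimodular_multiple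
    (M : ℕ) (g₁ g₂ : Fin M → ℂ) :
    (∀ S : Matrix (Fin M) (Fin M) ℂ, S.PosSemidef →
        g₁ ⬝ᵥ S.mulVec (star g₁) = g₂ ⬝ᵥ S.mulVec (star g₂))
      ↔ ∃ c : ℂ, ‖c‖ = 1 ∧ g₂ = c • g₁ := by
  constructor
  · intro h
    have key : ∀ v : Fin M → ℂ,
        (g₁ ⬝ᵥ v) * star (g₁ ⬝ᵥ v) = (g₂ ⬝ᵥ v) * star (g₂ ⬝ᵥ v) := by
      intro v
      have := h _ (outer_psd M v)
      rwa [quad_eval, quad_eval] at this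
    have hsI : star Complex.I = -Complex.I := by
      simp [Complex.ext_iff]
    have hdiag : ∀ j, g₁ j * star (g₁ j) = g₂ j * star (g₂ j) := by
      intro j
      have := key (Pi.single j 1)
      simpa [dotProduct_single] using this
    have claim : ∀ i j, g₁ i * star (g₁ j) = g₂ i * star (g₂ j) := by
      intro i j
      rcases eq_or_ne i j with rfl | hij
      · exact hdiag i
      · have e1 := key (Pi.single i 1 + Pi.single j 1)
        have e2 := key (Pi.single i 1 + Pi.single j Complex.I)
        simp only [add_dotProduct, dotProduct_add, dotProduct_single, mul_one,
          star_add, star_mul', star_one, hsI] at e1 e2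
        have hII := Complex.I_mul_I
        have hdi := hdiag i
        have hdj := hdiag j
        linear_combination (e1 - hdi - hdj + Complex.I * (e2 - hdi - hdj)) / 2
          + ((Complex.I * (g₁ j * star (g₁ j) - g₂ j * star (g₂ j))
              - ((-(g₁ i * star (g₁ j)) + g₁ j * star (g₁ i))
                 - (-(g₂ i * star (g₂ j)) + g₂ j * star (g₂ i)))) / 2) * hII
    by_cases hg : g₁ = 0
    · refine ⟨1, by simp, ?_⟩
      funext j
      have hj := hdiag j
      rw [hg] at hj
      simp only [Pi.zero_apply, zero_mul] at hj
      have : g₂ j = 0 := by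
        rcases mul_eq_zero.mp hj.symm with h0 | h0
        · exact h0
        · simpa using h0
      simp [hg, this]
    · obtain ⟨i₀, hi₀⟩ := Function.ne_iff.mp hg
      simp only [Pi.zero_apply] at hi₀
      have hd := hdiag i₀
      have hi₂ : g₂ i₀ ≠ 0 := by
        intro h0
        rw [h0] at hd
        simp only [zero_mul] at hd
        rcases mul_eq_zero.mp hd with h1 | h1
        · exact hi₀ h1
        · exact hi₀ (by simpa using h1)
      refine ⟨g₂ i₀ / g₁ i₀, ?_, ?_⟩
      · have habs : ‖g₁ i₀‖ = ‖g₂ i₀‖ := by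
          have h5 := congrArg norm hd
          rw [norm_mul, norm_mul] at h5
          simp only [Complex.star_def, Complex.norm_conj] at h5
          exact (mul_self_inj_of_nonneg (norm_nonneg _) (norm_nonneg _)).mp h5
        rw [norm_div, ← habs, div_self (by simpa using hi₀)]
      · funext j
        have hcl := claim j i₀
        have hs₂ : star (g₂ i₀) ≠ 0 := by simpa using hi₂
        have h3 : star (g₂ i₀) * (g₂ j * g₁ i₀) = star (g₂ i₀) * (g₂ i₀ * g₁ j) := by
          linear_combination g₁ j * hd - g₁ i₀ * hcl
        have h4 : g₂ j * g₁ i₀ = g₂ i₀ * g₁ j := mul_left_cancel₀ hs₂ h3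
        have : g₂ j = g₂ i₀ / g₁ i₀ * g₁ j := by
          field_simp
          linear_combination h4
        simpa using this
  · rintro ⟨c, hc, rfl⟩ S hS
    have hcc : c * star c = 1 := by
      rw [Complex.star_def, Complex.mul_conj, Complex.normSq_eq_norm_sq, hc]
      norm_num
    have : ∀ x : Fin M → ℂ, (c • x) ⬝ᵥ S.mulVec (star (c • x))
        = (c * star c) * (x ⬝ᵥ S.mulVec (star x)) := by
      intro x
      rw [star_smul, mulVec_smul, smul_dotProduct, dotProduct_smul]
      simp [smul_smul, mul_comm, mul_assoc, mul_left_comm]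
    rw [this g₁, hcc, one_mul]
end

section
/- For PSD Hermitian matrices A, B of sizes n×n with B invertible, the limit as P → ∞ of [log det(I + P·A + P·B') − log det(I + P·B)] / log P equals rank(A + B') − rank(B), where B' is PSD. -/
open Matrix Filter
open scoped ComplexOrder

private lemma term_limit (c : ℝ) (hc : 0 ≤ c) :
    Tendsto (fun P : ℝ => Real.log (1 + P * c) / Real.log P) atTop
      (nhds (if c = 0 then (0 : ℝ) else 1)) := by
  rcases eq_or_lt_of_le hc with h0 | hpos
  · simp only [← h0, mul_zero, add_zero, Real.log_one, zero_div, if_pos rfl]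
    exact tendsto_const_nhds
  · rw [if_neg hpos.ne']
    have hEq : ∀ᶠ P in atTop, Real.log (1 + P * c) / Real.log P
        = 1 + Real.log (1 / P + c) / Real.log P := by
      filter_upwards [eventually_gt_atTop (1 : ℝ)] with P hP
      have hP0 : (0 : ℝ) < P := lt_trans one_pos hP
      have h1 : 1 + P * c = P * (1 / P + c) := by
        field_simp
      have hlogP : Real.log P ≠ 0 := ne_of_gt (Real.log_pos hP)
      rw [h1, Real.log_mul hP0.ne' (by positivity), add_div, div_self hlogP]
    have hEq' : (fun P : ℝ => Real.log (1 + P * c) / Real.log P)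
        =ᶠ[atTop] (fun P : ℝ => 1 + Real.log (1 / P + c) / Real.log P) := hEq
    refine Tendsto.congr' hEq'.symm ?_
    have h2 : Tendsto (fun P : ℝ => Real.log (1 / P + c)) atTop (nhds (Real.log c)) := by
      have hb : Tendsto (fun P : ℝ => 1 / P + c) atTop (nhds c) := by
        simpa using (tendsto_inv_atTop_zero.congr (fun x => (one_div x).symm)).add
          (tendsto_const_nhds (x := c))
      exact ((Real.continuousAt_log hpos.ne').tendsto.comp hb)
    have h3 : Tendsto (fun P : ℝ => Real.log (1 / P + c) / Real.log P) atTop (nhds 0) :=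
      h2.div_atTop Real.tendsto_log_atTop
    have := (tendsto_const_nhds (x := (1:ℝ)) (f := atTop)).add h3
    simpa using this

private lemma det_formula {n : ℕ} {M : Matrix (Fin n) (Fin n) ℂ} (hM : M.PosSemidef) (P : ℝ) :
    (1 + (P : ℂ) • M).det
      = ∏ i, ((1 + P * hM.isHermitian.eigenvalues i : ℝ) : ℂ) := by
  set U : Matrix (Fin n) (Fin n) ℂ := ↑hM.isHermitian.eigenvectorUnitary with hU
  set lam := hM.isHermitian.eigenvalues with hlam
  have key : (1 : Matrix (Fin n) (Fin n) ℂ) + (P : ℂ) • M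
      = U * diagonal (fun i => 1 + (P : ℂ) * (lam i : ℂ)) * star U := by
    have hd : (diagonal (fun i => 1 + (P : ℂ) * (lam i : ℂ)))
        = 1 + (P : ℂ) • diagonal (RCLike.ofReal ∘ lam) := by
      rw [← diagonal_one, ← diagonal_smul, ← diagonal_add]
      rfl
    have hUs : U * star U = 1 := by
      rw [hU, ← Unitary.coe_star]
      exact Unitary.coe_mul_star_self _
    rw [hd, mul_add, add_mul, mul_one, hUs, mul_smul_comm,
      smul_mul_assoc, hM.isHermitian.spectral_theorem, Unitary.conjStarAlgAut_apply]
  have hdetU : U.det * (star U).det = 1 := by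
    rw [← det_mul]
    rw [hU, ← Unitary.coe_star, Unitary.coe_mul_star_self, det_one]
  have h1 : (U * diagonal (fun i => 1 + (P : ℂ) * (lam i : ℂ)) * star U).det
      = (diagonal (fun i => 1 + (P : ℂ) * (lam i : ℂ))).det * (U.det * (star U).det) := by
    rw [det_mul, det_mul]; ring
  rw [key, h1, hdetU, mul_one, det_diagonal]
  push_cast
  rfl

private lemma key_limit {n : ℕ} {M : Matrix (Fin n) (Fin n) ℂ} (hM : M.PosSemidef) :
    Tendsto (fun P : ℝ => Real.log ‖(1 + (P : ℂ) • M).det‖ / Real.log P)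
      atTop (nhds (M.rank : ℝ)) := by
  set lam := hM.isHermitian.eigenvalues with hlam
  have hnn : ∀ i, 0 ≤ lam i := fun i => hM.eigenvalues_nonneg i
  have hEq : ∀ᶠ P : ℝ in atTop, Real.log ‖(1 + (P : ℂ) • M).det‖ / Real.log P
      = ∑ i, Real.log (1 + P * lam i) / Real.log P := by
    filter_upwards [eventually_gt_atTop (0 : ℝ)] with P hP
    have hpos : ∀ i, 0 < 1 + P * lam i := fun i =>
      add_pos_of_pos_of_nonneg one_pos (mul_nonneg hP.le (hnn i))
    rw [det_formula hM P, Complex.norm_prod,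
      Finset.prod_congr rfl (fun i _ => by
        rw [Complex.norm_real, Real.norm_eq_abs, abs_of_pos (hpos i)]),
      Real.log_prod (fun i _ => (hpos i).ne'), Finset.sum_div]
  have hEq' : (fun P : ℝ => Real.log ‖(1 + (P : ℂ) • M).det‖ / Real.log P)
      =ᶠ[atTop] (fun P : ℝ => ∑ i, Real.log (1 + P * lam i) / Real.log P) := hEq
  refine Tendsto.congr' hEq'.symm ?_
  have hsum : Tendsto (fun P : ℝ => ∑ i, Real.log (1 + P * lam i) / Real.log P) atTop
      (nhds (∑ i, if lam i = 0 then (0 : ℝ) else 1)) :=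
    tendsto_finset_sum _ (fun i _ => term_limit (lam i) (hnn i))
  have hrk : (M.rank : ℝ) = ∑ i, if lam i = 0 then (0 : ℝ) else 1 := by
    rw [hM.isHermitian.rank_eq_card_non_zero_eigs, Fintype.card_subtype,
      Finset.card_filter]
    push_cast
    rw [← hlam]
    exact Finset.sum_congr rfl fun i _ => by by_cases h : lam i = 0 <;> simp [h]
  rw [hrk]
  exact hsum

theorem prelog_difference_limit (n : ℕ) (A B B' : Matrix (Fin n) (Fin n) ℂ)
    (hA : A.PosSemidef) (hB : B.PosSemidef) (hB' : B'.PosSemidef)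
    (hBinv : IsUnit B) :
    Tendsto (fun P : ℝ =>
        (Real.log ‖(1 + (P : ℂ) • A + (P : ℂ) • B').det‖
          - Real.log ‖(1 + (P : ℂ) • B).det‖) / Real.log P)
      atTop (nhds (((A + B').rank : ℝ) - (B.rank : ℝ))) := by
  have hAB' : (A + B').PosSemidef := hA.add hB'
  have hfun : ∀ P : ℝ, 1 + (P : ℂ) • A + (P : ℂ) • B' = 1 + (P : ℂ) • (A + B') := fun P => by
    rw [smul_add, add_assoc]
  simp_rw [hfun, sub_div]
  exact (key_limit hAB').sub (key_limit hB)
end
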